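/- Let n > 3 be odd and let k ∈ {0,…,(n−1)/2}. If k is even then H_n(k) = 4[(R_n/cos²(θ_n/2)) cos(kθ_n) + (R_n/cos(θ_n/2)) sin(kθ_n) + R_n²(1 + r_n⁴)] − 2, and if k is odd then H_n(k) = 4[(R_n/cos²(θ_n/2)) cos(kθ_n) + (R_n/cos(θ_n/2)) sin(kθ_n) + 2R_n² r_n²] − 2. -/

import Mathlib

noncomputable section

/-- Standard inner product on `ℝ³`. -/
def dot3 (v w : Fin 3 → ℝ) : ℝ := ∑ i, v i * w i

/-- The angle `θ_n = π / n`. -/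
def thetaN (n : ℕ) : ℝ := Real.pi / n

/-- `r_n = (cos θ_n)^{-1/2}`. -/
def rN (n : ℕ) : ℝ := Real.sqrt (Real.cos (thetaN n))⁻¹

/-- `R_n = 1 / (1 + r_n²)`. -/
def RN (n : ℕ) : ℝ := 1 / (1 + rN n ^ 2)

/-- The pure states `ω_n(i)` of the regular polygon theory. -/
def omegaN (n i : ℕ) : Fin 3 → ℝ :=
  ![rN n * Real.cos (2 * (i : ℝ) * thetaN n), rN n * Real.sin (2 * (i : ℝ) * thetaN n), 1]

/-- The state space `Ω_n`, the convex hull of the pure states. -/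
def OmegaN (n : ℕ) : Set (Fin 3 → ℝ) :=
  convexHull ℝ {v | ∃ i < n, v = omegaN n i}

/-- The unit effect `u = (0,0,1)`. -/
def uEff : Fin 3 → ℝ := ![0, 0, 1]

/-- The pure effects `e_n(i)` (separate formulas for even and odd `n`). -/
def eN (n i : ℕ) : Fin 3 → ℝ :=
  if Even n then
    (1 / 2 : ℝ) • ![rN n * Real.cos ((2 * (i : ℝ) + 1) * thetaN n),
                    rN n * Real.sin ((2 * (i : ℝ) + 1) * thetaN n), 1]
  else
    RN n • ![rN n * Real.cos (2 * (i : ℝ) * thetaN n),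
             rN n * Real.sin (2 * (i : ℝ) * thetaN n), 1]

/-- The complementary effect `ē_n(i) = u - e_n(i)`. -/
def eBarN (n i : ℕ) : Fin 3 → ℝ := uEff - eN n i

/-- The effect space `E_n`. -/
def EffN (n : ℕ) : Set (Fin 3 → ℝ) :=
  {f | ∀ ω ∈ OmegaN n, dot3 f ω ∈ Set.Icc (0 : ℝ) 1}

/-- The positive cone `V_{n+}` generated by the state space. -/
def VposN (n : ℕ) : Set (Fin 3 → ℝ) :=
  {x | ∃ c : ℝ, 0 ≤ c ∧ ∃ ω ∈ OmegaN n, x = c • ω}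

/-- The dual cone `V*_{n+}` generated by the effect space. -/
def VdualN (n : ℕ) : Set (Fin 3 → ℝ) :=
  {x | ∃ c : ℝ, 0 ≤ c ∧ ∃ f ∈ EffN n, x = c • f}

/-- A state of `Ω_n ⊗_max Ω_n`, identified with a normalized cone-preserving linear map. -/
def IsState (n : ℕ) (η : (Fin 3 → ℝ) →ₗ[ℝ] (Fin 3 → ℝ)) : Prop :=
  (∀ x ∈ VdualN n, η x ∈ VposN n) ∧ dot3 uEff (η uEff) = 1

/-- A binary observable on `Ω_n`: a pair of effects summing to the unit effect. -/
def IsObservable (n : ℕ) (A : (Fin 3 → ℝ) × (Fin 3 → ℝ)) : Prop :=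
  A.1 ∈ EffN n ∧ A.2 ∈ EffN n ∧ A.1 + A.2 = uEff

/-- The observable `E_n(i) = (e_n(i), ē_n(i))`. -/
def EObs (n i : ℕ) : (Fin 3 → ℝ) × (Fin 3 → ℝ) := (eN n i, eBarN n i)

/-- The correlator `E(st) = Σ_{a,b} (-1)^{a+b} ⟨B^b, η(A^a)⟩`. -/
def corr (η : (Fin 3 → ℝ) →ₗ[ℝ] (Fin 3 → ℝ)) (A B : (Fin 3 → ℝ) × (Fin 3 → ℝ)) : ℝ :=
  dot3 B.1 (η A.1) - dot3 B.2 (η A.1) - dot3 B.1 (η A.2) + dot3 B.2 (η A.2)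

/-- The CHSH value `C[η; A₀,A₁; B₀,B₁] = E(00) + E(01) + E(10) - E(11)`. -/
def CHSH (η : (Fin 3 → ℝ) →ₗ[ℝ] (Fin 3 → ℝ))
    (A0 A1 B0 B1 : (Fin 3 → ℝ) × (Fin 3 → ℝ)) : ℝ :=
  corr η A0 B0 + corr η A0 B1 + corr η A1 B0 - corr η A1 B1

/-- `GL(Ω_n)`: linear bijections of `ℝ³` preserving the state space. -/
def GLOmega (n : ℕ) : Set ((Fin 3 → ℝ) →ₗ[ℝ] (Fin 3 → ℝ)) :=
  {T | Function.Bijective T ∧ T '' OmegaN n = OmegaN n}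

/-- The order isomorphism `T_n`: a rotation by `θ_n` for even `n`, the identity for odd `n`. -/
def TN (n : ℕ) : (Fin 3 → ℝ) →ₗ[ℝ] (Fin 3 → ℝ) :=
  if Even n then
    Matrix.toLin' !![Real.cos (thetaN n), Real.sin (thetaN n), 0;
                     -Real.sin (thetaN n), Real.cos (thetaN n), 0;
                     0, 0, 1]
  else LinearMap.id

/-- Maximally entangled states: elements of `T_n · GL(Ω_n)`. -/
def MaxEnt (n : ℕ) (η : (Fin 3 → ℝ) →ₗ[ℝ] (Fin 3 → ℝ)) : Prop :=
  ∃ T ∈ GLOmega n, η = (TN n).comp T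

/-- The effects `Q_s^a` built from Bob's observables `B₀ = E_n(k)`, `B₁ = E_n(0)`:
`Q₀⁰ = ½(B₀⁰+B₁⁰)`, `Q₀¹ = ½(B₀¹+B₁¹)`, `Q₁⁰ = ½(B₀⁰+B₁¹)`, `Q₁¹ = ½(B₀¹+B₁⁰)`. -/
def QQ (n k : ℕ) : Fin 2 → Fin 2 → Fin 3 → ℝ :=
  ![![(1 / 2 : ℝ) • (eN n k + eN n 0), (1 / 2 : ℝ) • (eBarN n k + eBarN n 0)],
    ![(1 / 2 : ℝ) • (eN n k + eBarN n 0), (1 / 2 : ℝ) • (eBarN n k + eN n 0)]]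

/-- Assemblage pairs `{(p(a|s), ω_s^a)}` (first index `s`, second `a`). -/
def EnsAll (n : ℕ) : Set ((Fin 2 → Fin 2 → ℝ) × (Fin 2 → Fin 2 → Fin 3 → ℝ)) :=
  {pw | (∀ s a, 0 ≤ pw.1 s a) ∧ (∀ s, ∑ a, pw.1 s a = 1) ∧
        (∀ s a, pw.2 s a ∈ OmegaN n) ∧
        (∑ a, pw.1 0 a • pw.2 0 a) = (∑ a, pw.1 1 a • pw.2 1 a)}

/-- Assemblage pairs generated by maximally entangled states. -/
def EnsME (n : ℕ) : Set ((Fin 2 → Fin 2 → ℝ) × (Fin 2 → Fin 2 → Fin 3 → ℝ)) :=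
  {pw | pw ∈ EnsAll n ∧ ∃ η ∈ GLOmega n, ∃ i < n, ∃ j < n,
        η (eN n i) = pw.1 0 0 • pw.2 0 0 ∧ η (eBarN n i) = pw.1 0 1 • pw.2 0 1 ∧
        η (eN n j) = pw.1 1 0 • pw.2 1 0 ∧ η (eBarN n j) = pw.1 1 1 • pw.2 1 1}

/-- The CHSH value of an assemblage pair:
`C = 4(Σ_{s,a} p(a|s) ⟨Q_s^a, ω_s^a⟩ − 1)`. -/
def CEns (n k : ℕ) (pw : (Fin 2 → Fin 2 → ℝ) × (Fin 2 → Fin 2 → Fin 3 → ℝ)) : ℝ :=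
  4 * ((∑ s, ∑ a, pw.1 s a * dot3 (QQ n k s a) (pw.2 s a)) - 1)

/-- `G_n(k)`: the optimal CHSH value over all assemblage pairs. -/
def Gfun (n k : ℕ) : ℝ := sSup ((fun pw => |CEns n k pw|) '' EnsAll n)

/-- `H_n(k)`: the optimal CHSH value over assemblage pairs from maximally entangled
states. -/
def Hfun (n k : ℕ) : ℝ := sSup ((fun pw => |CEns n k pw|) '' EnsME n)

/-- `n⋆ = (n−1)/4` if `n ≡ 1, 5 (mod 8)` and `n⋆ = (n+1)/4` if `n ≡ 3, 7 (mod 8)`. -/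
def nStar (n : ℕ) : ℕ := if n % 8 = 1 ∨ n % 8 = 5 then (n - 1) / 4 else (n + 1) / 4

-- ============ auxiliary lemmas ============
namespace HAux

open Real

variable {n : ℕ}

lemma n_ge5 (hodd : Odd n) (hn : 3 < n) : 5 ≤ n := by
  rcases hodd with ⟨m, rfl⟩; omega

lemma theta_pos (hn : 3 < n) : 0 < thetaN n :=
  div_pos Real.pi_pos (by positivity)

lemma theta_le (hodd : Odd n) (hn : 3 < n) : thetaN n ≤ π / 5 := by
  have h5 : (5:ℝ) ≤ n := by exact_mod_cast n_ge5 hodd hn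
  exact div_le_div_of_nonneg_left Real.pi_pos.le (by norm_num) h5 |>.trans_eq rfl

lemma theta_lt_pi_half (hodd : Odd n) (hn : 3 < n) : thetaN n < π / 2 := by
  have := theta_le hodd hn
  nlinarith [Real.pi_pos]

lemma cos_theta_pos (hodd : Odd n) (hn : 3 < n) : 0 < Real.cos (thetaN n) := by
  apply Real.cos_pos_of_mem_Ioo
  constructor
  · nlinarith [theta_pos hn, Real.pi_pos]
  · exact theta_lt_pi_half hodd hn

lemma cos_theta_lt_one (hodd : Odd n) (hn : 3 < n) : Real.cos (thetaN n) < 1 := by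
  have h1 := theta_pos hn
  have h2 := theta_lt_pi_half hodd hn
  have := Real.cos_lt_cos_of_nonneg_of_le_pi (le_refl (0:ℝ)) (by nlinarith [Real.pi_pos]) h1
  simpa using this

lemma rsq (hodd : Odd n) (hn : 3 < n) : rN n ^ 2 = (Real.cos (thetaN n))⁻¹ := by
  rw [rN, Real.sq_sqrt]
  have := cos_theta_pos hodd hn
  positivity

lemma rsq_cos (hodd : Odd n) (hn : 3 < n) : rN n ^ 2 * Real.cos (thetaN n) = 1 := by
  rw [rsq hodd hn]
  have := (cos_theta_pos hodd hn).ne'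
  field_simp

lemma r_pos (hodd : Odd n) (hn : 3 < n) : 0 < rN n := by
  rw [rN]
  have := cos_theta_pos hodd hn
  positivity

lemma rsq_gt_one (hodd : Odd n) (hn : 3 < n) : 1 < rN n ^ 2 := by
  rw [rsq hodd hn]
  rw [lt_inv_comm₀] <;> [skip; norm_num; exact cos_theta_pos hodd hn]
  · simpa using cos_theta_lt_one hodd hn

lemma R_pos (hodd : Odd n) (hn : 3 < n) : 0 < RN n := by
  rw [RN]
  have := r_pos hodd hn
  positivity

lemma R_id (hodd : Odd n) (hn : 3 < n) : RN n * (1 + rN n ^ 2) = 1 := by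
  rw [RN]
  have := r_pos hodd hn
  field_simp

end HAux

namespace HAux

variable {n : ℕ}

/-- cos of an odd multiple of `Real.pi/N` is at most `cos (Real.pi/N)`. -/
lemma cos_odd_le {N : ℕ} (hN : 0 < N) (q : ℤ) (hq : Odd q) :
    Real.cos (q * (Real.pi / N)) ≤ Real.cos (Real.pi / N) := by
  have hNR : (0:ℝ) < N := by exact_mod_cast hN
  set r : ℤ := q % (2 * N) with hr
  have h2N : (0:ℤ) < 2 * N := by positivity
  have hr0 : 0 ≤ r := Int.emod_nonneg q h2N.ne'
  have hrlt : r < 2 * N := Int.emod_lt_of_pos q h2N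
  have hrodd : Odd r := by
    rcases hq with ⟨c, hc⟩
    rw [hr, Int.odd_iff, Int.emod_emod_of_dvd, ← Int.odd_iff]
    · exact ⟨c, hc⟩
    · exact ⟨(N:ℤ), by ring⟩
  have hcos : Real.cos (q * (Real.pi / N)) = Real.cos (r * (Real.pi / N)) := by
    have hqe : q = r + 2 * N * (q / (2 * N)) := by
      rw [hr]; linarith [Int.emod_add_mul_ediv q (2*N)]
    rw [hqe]
    push_cast
    rw [show ((r:ℝ) + 2 * N * (q / (2*N) : ℤ)) * (Real.pi / N)
        = r * (Real.pi / N) + (q / (2*N) : ℤ) * (2 * Real.pi) by field_simp]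
    exact Real.cos_add_int_mul_two_pi _ _
  rw [hcos]
  have hr1 : 1 ≤ r := by
    rcases hrodd with ⟨c, hc⟩; omega
  rcases le_or_gt r N with h | h
  · apply Real.cos_le_cos_of_nonneg_of_le_pi (by positivity)
    · calc (r:ℝ) * (Real.pi / N) ≤ N * (Real.pi / N) := by
            have : (r:ℝ) ≤ N := by exact_mod_cast h
            have : (0:ℝ) < Real.pi / N := by positivity
            nlinarith
        _ = Real.pi := by field_simp
    · have h1r : (1:ℝ) ≤ r := by exact_mod_cast hr1
      calc Real.pi / N = 1 * (Real.pi / N) := by ring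
        _ ≤ r * (Real.pi / N) := by
            have : (0:ℝ) < Real.pi / N := by positivity
            nlinarith
  · have : Real.cos ((r:ℝ) * (Real.pi / N)) = Real.cos (((2 * N - r : ℤ)) * (Real.pi / N)) := by
      rw [← Real.cos_two_pi_sub]
      congr 1
      push_cast
      field_simp
    rw [this]
    have h1 : (1:ℤ) ≤ 2 * N - r := by omega
    have h2 : (2 * N - r : ℤ) ≤ N := by omega
    apply Real.cos_le_cos_of_nonneg_of_le_pi (by positivity)
    · calc ((2 * N - r : ℤ):ℝ) * (Real.pi / N) ≤ N * (Real.pi / N) := by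
            have : ((2 * N - r : ℤ):ℝ) ≤ N := by exact_mod_cast h2
            have : (0:ℝ) < Real.pi / N := by positivity
            nlinarith
        _ = Real.pi := by field_simp
    · have h1r : (1:ℝ) ≤ ((2 * N - r : ℤ):ℝ) := by exact_mod_cast h1
      calc Real.pi / N = 1 * (Real.pi / N) := by ring
        _ ≤ ((2 * N - r : ℤ):ℝ) * (Real.pi / N) := by
            have : (0:ℝ) < Real.pi / N := by positivity
            nlinarith

end HAux

namespace HAux

variable {n : ℕ}

lemma half_theta (hn : 3 < n) : thetaN n / 2 = Real.pi / (2*n) := by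
  rw [thetaN, div_div, mul_comm]

lemma n_theta (hn : 3 < n) : (n:ℝ) * thetaN n = Real.pi := by
  rw [thetaN]
  have : (n:ℝ) ≠ 0 := by positivity
  field_simp

lemma cos_half_pos (hodd : Odd n) (hn : 3 < n) : 0 < Real.cos (thetaN n / 2) := by
  apply Real.cos_pos_of_mem_Ioo
  have h1 := theta_pos hn
  have h2 := theta_lt_pi_half hodd hn
  constructor <;> [nlinarith [Real.pi_pos]; nlinarith]

lemma sin_le_cos_half (hodd : Odd n) (hn : 3 < n) (m : ℤ) :
    Real.sin (m * thetaN n) ≤ Real.cos (thetaN n / 2) := by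
  have hn0 : (0:ℝ) < n := by positivity
  have hq : Odd ((n:ℤ) - 2*m) := by
    rcases hodd with ⟨c, hc⟩
    exact ⟨(c:ℤ) - m, by push_cast [hc]; ring⟩
  have key := cos_odd_le (N := 2*n) (by omega) ((n:ℤ) - 2*m) hq
  have harg : (((n:ℤ) - 2*m : ℤ):ℝ) * (Real.pi/((2*n : ℕ):ℝ)) = Real.pi/2 - m * thetaN n := by
    rw [thetaN]; push_cast; field_simp
  have harg2 : Real.pi/((2*n:ℕ):ℝ) = thetaN n / 2 := by
    rw [half_theta hn]; push_cast; ring_nf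
  rw [harg] at key; rw [harg2] at key
  calc Real.sin (m * thetaN n) = Real.cos (Real.pi/2 - m * thetaN n) := by
        rw [Real.cos_pi_div_two_sub]
    _ ≤ Real.cos (thetaN n / 2) := key

lemma neg_cos_half_le_sin (hodd : Odd n) (hn : 3 < n) (m : ℤ) :
    -Real.cos (thetaN n / 2) ≤ Real.sin (m * thetaN n) := by
  have := sin_le_cos_half hodd hn (-m)
  rw [show ((-m : ℤ):ℝ) * thetaN n = -(m * thetaN n) by push_cast; ring, Real.sin_neg] at this
  linarith

lemma cos_odd_mul_le (hodd : Odd n) (hn : 3 < n) (m : ℤ) (hm : Odd m) :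
    Real.cos (m * thetaN n) ≤ Real.cos (thetaN n) := by
  have key := cos_odd_le (N := n) (by omega) m hm
  rw [thetaN]
  exact key

lemma sin_max_of (hn : 3 < n) (m : ℤ) (hm : 2*m+1 = (n:ℤ)) :
    Real.sin (m * thetaN n) = Real.cos (thetaN n / 2) := by
  have hn0 : (0:ℝ) < n := by positivity
  have hmr : (m:ℝ) = ((n:ℝ)-1)/2 := by
    have := congrArg (fun z : ℤ => (z:ℝ)) hm
    push_cast at this
    linarith
  have : m * thetaN n = Real.pi/2 - thetaN n/2 := by
    rw [thetaN, hmr]; field_simp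
  rw [this, Real.sin_pi_div_two_sub]

lemma sin_max_of' (hn : 3 < n) (m : ℤ) (hm : 2*m-1 = (n:ℤ)) :
    Real.sin (m * thetaN n) = Real.cos (thetaN n / 2) := by
  have hn0 : (0:ℝ) < n := by positivity
  have hmr : (m:ℝ) = ((n:ℝ)+1)/2 := by
    have := congrArg (fun z : ℤ => (z:ℝ)) hm
    push_cast at this
    linarith
  have h1 : m * thetaN n = Real.pi - (Real.pi/2 - thetaN n/2) := by
    rw [thetaN, hmr]; field_simp; ring
  rw [h1, Real.sin_pi_sub, Real.sin_pi_div_two_sub]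

lemma exists_sin_max (hodd : Odd n) (hn : 3 < n) (k : ℕ) :
    ∃ m : ℤ, (m - k) % 2 = 0 ∧ Real.sin (m * thetaN n) = Real.cos (thetaN n / 2) := by
  rcases hodd with ⟨c, hc⟩
  by_cases hpar : ((c:ℤ) - k) % 2 = 0
  · exact ⟨c, hpar, sin_max_of hn c (by omega)⟩
  · refine ⟨(c:ℤ)+1, by omega, ?_⟩
    exact sin_max_of' hn ((c:ℤ)+1) (by omega)

lemma exists_sin_min (hodd : Odd n) (hn : 3 < n) (k : ℕ) :
    ∃ m : ℤ, (m - k) % 2 = 0 ∧ Real.sin (m * thetaN n) = -Real.cos (thetaN n / 2) := by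
  obtain ⟨m, hp, hs⟩ := exists_sin_max hodd hn k
  refine ⟨-m, by omega, ?_⟩
  rw [show ((-m : ℤ):ℝ) * thetaN n = -(m * thetaN n) by push_cast; ring, Real.sin_neg, hs]

lemma cos_n_theta (hn : 3 < n) : Real.cos ((n:ℤ) * thetaN n) = -1 := by
  rw [show (((n:ℤ)):ℝ) * thetaN n = (n:ℝ) * thetaN n by push_cast; ring, n_theta hn,
    Real.cos_pi]

end HAux

namespace HAux

variable {n : ℕ}

/-- The vertex finset. -/
def vertF (n : ℕ) : Finset (Fin 3 → ℝ) := (Finset.range n).image (omegaN n)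

lemma OmegaN_eq (n : ℕ) : OmegaN n = convexHull ℝ ↑(vertF n) := by
  rw [OmegaN]
  congr 1
  ext v
  simp only [vertF, Finset.coe_image, Finset.coe_range, Set.mem_image, Set.mem_Iio,
    Set.mem_setOf_eq]
  constructor
  · rintro ⟨i, hi, rfl⟩; exact ⟨i, hi, rfl⟩
  · rintro ⟨i, hi, rfl⟩; exact ⟨i, hi, rfl⟩

lemma omega_mem (i : ℕ) (hi : i < n) : omegaN n i ∈ OmegaN n := by
  apply subset_convexHull
  exact ⟨i, hi, rfl⟩

/-- The exposing functional for vertex `i`. -/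
def fL (n i : ℕ) : (Fin 3 → ℝ) →ₗ[ℝ] ℝ :=
  Real.cos (2*(i:ℝ)*thetaN n) • (LinearMap.proj 0 : ((Fin 3) → ℝ) →ₗ[ℝ] ℝ)
  + Real.sin (2*(i:ℝ)*thetaN n) • (LinearMap.proj 1 : ((Fin 3) → ℝ) →ₗ[ℝ] ℝ)

lemma fL_apply (i : ℕ) (x : Fin 3 → ℝ) :
    fL n i x = Real.cos (2*(i:ℝ)*thetaN n) * x 0 + Real.sin (2*(i:ℝ)*thetaN n) * x 1 := rfl

lemma fL_omega (i j : ℕ) :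
    fL n i (omegaN n j) = rN n * Real.cos (2*(j:ℝ)*thetaN n - 2*(i:ℝ)*thetaN n) := by
  rw [fL_apply, omegaN, Real.cos_sub]
  simp [Matrix.cons_val_zero, Matrix.cons_val_one]
  ring

lemma fL_omega_self (i : ℕ) : fL n i (omegaN n i) = rN n := by
  rw [fL_omega]; simp

lemma fL_omega_lt (hodd : Odd n) (hn : 3 < n) {i j : ℕ} (hi : i < n) (hj : j < n)
    (hij : j ≠ i) : fL n i (omegaN n j) < rN n := by
  rw [fL_omega]
  have hr := r_pos hodd hn
  have hcle : Real.cos (2*(j:ℝ)*thetaN n - 2*(i:ℝ)*thetaN n) < 1 := by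
    rcases lt_or_ge (Real.cos (2*(j:ℝ)*thetaN n - 2*(i:ℝ)*thetaN n)) 1 with h | h
    · exact h
    · exfalso
      have heq : Real.cos (2*(j:ℝ)*thetaN n - 2*(i:ℝ)*thetaN n) = 1 :=
        le_antisymm (Real.cos_le_one _) h
      have hθ := theta_pos hn
      have hnθ := n_theta hn
      have hlt1 : -(2*Real.pi) < 2*(j:ℝ)*thetaN n - 2*(i:ℝ)*thetaN n := by
        have : (i:ℝ) < n := by exact_mod_cast hi
        nlinarith
      have hlt2 : 2*(j:ℝ)*thetaN n - 2*(i:ℝ)*thetaN n < 2*Real.pi := by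
        have : (j:ℝ) < n := by exact_mod_cast hj
        nlinarith
      have := (Real.cos_eq_one_iff_of_lt_of_lt hlt1 hlt2).1 heq
      have hji : (j:ℝ) = i := by
        have h2 : (2*(j:ℝ) - 2*(i:ℝ)) * thetaN n = 0 := by linarith [this]; 
        rcases mul_eq_zero.1 h2 with h | h
        · linarith
        · exact absurd h hθ.ne'
      exact hij (by exact_mod_cast hji)
  nlinarith

lemma fL_le (hodd : Odd n) (hn : 3 < n) (i : ℕ) {x : Fin 3 → ℝ} (hx : x ∈ OmegaN n) :
    fL n i x ≤ rN n := by
  have hconv : Convex ℝ {w : Fin 3 → ℝ | fL n i w ≤ rN n} :=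
    convex_halfSpace_le (fL n i).isLinear _
  have hsub : {v : Fin 3 → ℝ | ∃ i < n, v = omegaN n i} ⊆ {w | fL n i w ≤ rN n} := by
    rintro v ⟨j, hj, rfl⟩
    show fL n i (omegaN n j) ≤ rN n
    rw [fL_omega]
    have hr := r_pos hodd hn
    nlinarith [Real.cos_le_one (2*(j:ℝ)*thetaN n - 2*(i:ℝ)*thetaN n)]
  exact convexHull_min hsub hconv hx

lemma fL_eq_imp (hodd : Odd n) (hn : 3 < n) {i : ℕ} (hi : i < n) {x : Fin 3 → ℝ}
    (hx : x ∈ OmegaN n) (hfx : fL n i x = rN n) : x = omegaN n i := by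
  rw [OmegaN_eq, Finset.convexHull_eq] at hx
  obtain ⟨w, hw0, hw1, hwc⟩ := hx
  rw [Finset.centerMass_eq_of_sum_1 _ _ hw1] at hwc
  have hzero : ∀ y ∈ vertF n, w y * (rN n - fL n i y) = 0 := by
    rw [← Finset.sum_eq_zero_iff_of_nonneg]
    · have h1 : ∑ y ∈ vertF n, w y * fL n i y = rN n := by
        have : fL n i x = ∑ y ∈ vertF n, w y * fL n i y := by
          rw [← hwc, map_sum]
          exact Finset.sum_congr rfl fun y _ => by rw [map_smul]; rfl
        rw [← this, hfx]
      have h2 : ∑ y ∈ vertF n, w y * rN n = rN n := by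
        rw [← Finset.sum_mul, hw1, one_mul]
      rw [Finset.sum_congr rfl fun y _ => mul_sub (w y) (rN n) (fL n i y)]
      rw [Finset.sum_sub_distrib, h1, h2, sub_self]
    · intro y hy
      rcases Finset.mem_image.1 hy with ⟨j, hj, rfl⟩
      have hjle : fL n i (omegaN n j) ≤ rN n := fL_le hodd hn i (omega_mem j (Finset.mem_range.1 hj))
      have := hw0 _ hy
      nlinarith
  have hwvanish : ∀ y ∈ vertF n, y ≠ omegaN n i → w y = 0 := by
    intro y hy hne
    rcases Finset.mem_image.1 hy with ⟨j, hj, rfl⟩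
    have hjn := Finset.mem_range.1 hj
    have hji : j ≠ i := fun h => hne (by rw [h])
    have hlt := fL_omega_lt hodd hn hi hjn hji
    have := hzero _ hy
    rcases mul_eq_zero.1 this with h | h
    · exact h
    · exfalso; nlinarith
  have hmemV : omegaN n i ∈ vertF n :=
    Finset.mem_image.2 ⟨i, Finset.mem_range.2 hi, rfl⟩
  have hwi : w (omegaN n i) = 1 := by
    have := Finset.sum_eq_single (s := vertF n) (f := fun y => w y) (omegaN n i)
      (fun y hy hne => hwvanish y hy hne) (fun h => absurd hmemV h)
    rw [this] at hw1
    exact hw1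
  rw [← hwc]
  rw [Finset.sum_eq_single (omegaN n i)]
  · rw [hwi, one_smul]; rfl
  · intro y hy hne
    rw [hwvanish y hy hne, zero_smul]
  · intro h; exact absurd hmemV h

end HAux

namespace HAux

variable {n : ℕ}

lemma omega_inj (hodd : Odd n) (hn : 3 < n) {i j : ℕ} (hi : i < n) (hj : j < n)
    (h : omegaN n i = omegaN n j) : i = j := by
  by_contra hne
  have := fL_omega_lt hodd hn hj hi (fun hc => hne hc)
  rw [h, fL_omega_self] at this
  exact lt_irrefl _ this

lemma glomega_symm_mem {T : (Fin 3 → ℝ) →ₗ[ℝ] (Fin 3 → ℝ)} (hT : T ∈ GLOmega n)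
    {y : Fin 3 → ℝ} (hy : y ∈ OmegaN n) :
    (LinearEquiv.ofBijective T hT.1).symm y ∈ OmegaN n := by
  obtain ⟨hbij, himg⟩ := hT
  rw [← himg] at hy
  obtain ⟨z, hz, rfl⟩ := hy
  have : (LinearEquiv.ofBijective T hbij).symm (T z) = z := by
    have : T z = (LinearEquiv.ofBijective T hbij) z := rfl
    rw [this, LinearEquiv.symm_apply_apply]
  rw [this]
  exact hz

/-- Elements of `GL(Ω_n)` map vertices to vertices. -/
lemma vertex_map (hodd : Odd n) (hn : 3 < n) {T : (Fin 3 → ℝ) →ₗ[ℝ] (Fin 3 → ℝ)}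
    (hT : T ∈ GLOmega n) {i : ℕ} (hi : i < n) :
    ∃ j < n, T (omegaN n i) = omegaN n j := by
  obtain ⟨hbij, himg⟩ := hT
  set e := LinearEquiv.ofBijective T hbij with he
  have hx : T (omegaN n i) ∈ OmegaN n := by
    rw [← himg]; exact ⟨omegaN n i, omega_mem i hi, rfl⟩
  rw [OmegaN_eq, Finset.convexHull_eq] at hx
  obtain ⟨w, hw0, hw1, hwc⟩ := hx
  rw [Finset.centerMass_eq_of_sum_1 _ _ hw1] at hwc
  have hsymm : ∀ y ∈ vertF n, e.symm y ∈ OmegaN n := by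
    intro y hy
    apply glomega_symm_mem ⟨hbij, himg⟩
    rcases Finset.mem_image.1 hy with ⟨j, hj, rfl⟩
    exact omega_mem j (Finset.mem_range.1 hj)
  have hrep : omegaN n i = ∑ y ∈ vertF n, w y • e.symm y := by
    have h1 : e.symm (T (omegaN n i)) = omegaN n i := by
      have : T (omegaN n i) = e (omegaN n i) := rfl
      rw [this, LinearEquiv.symm_apply_apply]
    rw [← h1, ← hwc, map_sum]
    exact Finset.sum_congr rfl fun y _ => by rw [map_smul]; rfl
  have hfsum : ∑ y ∈ vertF n, w y * fL n i (e.symm y) = rN n := by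
    have : fL n i (omegaN n i) = ∑ y ∈ vertF n, w y * fL n i (e.symm y) := by
      rw [hrep, map_sum]
      exact Finset.sum_congr rfl fun y _ => by rw [map_smul]; rfl
    rw [← this, fL_omega_self]
  have hzero : ∀ y ∈ vertF n, w y * (rN n - fL n i (e.symm y)) = 0 := by
    rw [← Finset.sum_eq_zero_iff_of_nonneg]
    · have h2 : ∑ y ∈ vertF n, w y * rN n = rN n := by
        rw [← Finset.sum_mul, hw1, one_mul]
      rw [Finset.sum_congr rfl fun y _ => mul_sub (w y) (rN n) _]
      rw [Finset.sum_sub_distrib, h2, hfsum, sub_self]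
    · intro y hy
      have hle := fL_le hodd hn i (hsymm y hy)
      have := hw0 _ hy
      nlinarith
  have hex : ∃ y ∈ vertF n, w y ≠ 0 := by
    by_contra hc
    push_neg at hc
    rw [Finset.sum_eq_zero hc] at hw1
    norm_num at hw1
  obtain ⟨y, hy, hwy⟩ := hex
  have hfy : fL n i (e.symm y) = rN n := by
    have := hzero y hy
    rcases mul_eq_zero.1 this with h | h
    · exact absurd h hwy
    · linarith
  have hey : e.symm y = omegaN n i := fL_eq_imp hodd hn hi (hsymm y hy) hfy
  rcases Finset.mem_image.1 hy with ⟨j, hj, rfl⟩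
  refine ⟨j, Finset.mem_range.1 hj, ?_⟩
  have : T (e.symm (omegaN n j)) = omegaN n j := by
    have h3 : ∀ z, T z = e z := fun _ => rfl
    rw [h3, LinearEquiv.apply_symm_apply]
  rw [← hey, this]

lemma sum_cos_zero (hodd : Odd n) (hn : 3 < n) :
    ∑ i ∈ Finset.range n, Real.cos (2*(i:ℝ)*thetaN n) = 0 := by
  have hθ := theta_pos hn
  have hsin : 0 < Real.sin (thetaN n) := by
    apply Real.sin_pos_of_pos_of_lt_pi hθ
    nlinarith [theta_lt_pi_half hodd hn, Real.pi_pos]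
  have hend : Real.sin ((2*(n:ℝ) - 1) * thetaN n) = Real.sin (-(thetaN n)) := by
    rw [show (2*(n:ℝ) - 1) * thetaN n = -(thetaN n) + 2*((n:ℝ)*thetaN n) by ring, n_theta hn]
    rw [show -(thetaN n) + 2*Real.pi = -(thetaN n) + (1:ℤ)*(2*Real.pi) by push_cast; ring]
    exact Real.sin_add_int_mul_two_pi _ 1
  have htel : ∑ i ∈ Finset.range n, 2 * Real.sin (thetaN n) * Real.cos (2*(i:ℝ)*thetaN n)
      = Real.sin ((2*(n:ℝ) - 1) * thetaN n) - Real.sin ((2*((0:ℕ):ℝ) - 1) * thetaN n) := by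
    rw [← Finset.sum_range_sub (fun i : ℕ => Real.sin ((2*(i:ℝ) - 1) * thetaN n)) n]
    refine Finset.sum_congr rfl fun i _ => ?_
    push_cast
    rw [show (2*((i:ℝ)+1) - 1) * thetaN n = 2*(i:ℝ)*thetaN n + thetaN n by ring,
      show (2*(i:ℝ) - 1) * thetaN n = 2*(i:ℝ)*thetaN n - thetaN n by ring,
      Real.sin_add, Real.sin_sub]
    ring
  have hz : Real.sin ((2*((0:ℕ):ℝ) - 1) * thetaN n) = Real.sin (-(thetaN n)) := by
    norm_num
  rw [hend, hz, sub_self] at htel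
  rw [← Finset.mul_sum] at htel
  rcases mul_eq_zero.1 htel with h | h
  · nlinarith
  · exact h

lemma sum_sin_zero (hodd : Odd n) (hn : 3 < n) :
    ∑ i ∈ Finset.range n, Real.sin (2*(i:ℝ)*thetaN n) = 0 := by
  have hθ := theta_pos hn
  have hsin : 0 < Real.sin (thetaN n) := by
    apply Real.sin_pos_of_pos_of_lt_pi hθ
    nlinarith [theta_lt_pi_half hodd hn, Real.pi_pos]
  have hend : Real.cos ((2*(n:ℝ) - 1) * thetaN n) = Real.cos (-(thetaN n)) := by
    rw [show (2*(n:ℝ) - 1) * thetaN n = -(thetaN n) + 2*((n:ℝ)*thetaN n) by ring, n_theta hn]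
    rw [show -(thetaN n) + 2*Real.pi = -(thetaN n) + (1:ℤ)*(2*Real.pi) by push_cast; ring]
    exact Real.cos_add_int_mul_two_pi _ 1
  have htel : ∑ i ∈ Finset.range n, 2 * Real.sin (thetaN n) * Real.sin (2*(i:ℝ)*thetaN n)
      = (-Real.cos ((2*(n:ℝ) - 1) * thetaN n)) - (-Real.cos ((2*((0:ℕ):ℝ) - 1) * thetaN n)) := by
    rw [← Finset.sum_range_sub (fun i : ℕ => -Real.cos ((2*(i:ℝ) - 1) * thetaN n)) n]
    refine Finset.sum_congr rfl fun i _ => ?_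
    push_cast
    rw [show (2*((i:ℝ)+1) - 1) * thetaN n = 2*(i:ℝ)*thetaN n + thetaN n by ring,
      show (2*(i:ℝ) - 1) * thetaN n = 2*(i:ℝ)*thetaN n - thetaN n by ring,
      Real.cos_add, Real.cos_sub]
    ring
  have hz : Real.cos ((2*((0:ℕ):ℝ) - 1) * thetaN n) = Real.cos (-(thetaN n)) := by
    norm_num
  rw [hend, hz, sub_self] at htel
  rw [← Finset.mul_sum] at htel
  rcases mul_eq_zero.1 htel with h | h
  · nlinarith
  · exact h

lemma sum_omega (hodd : Odd n) (hn : 3 < n) :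
    ∑ i ∈ Finset.range n, omegaN n i = (n:ℝ) • uEff := by
  funext c
  rw [Finset.sum_apply]
  have hc := sum_cos_zero hodd hn
  have hs := sum_sin_zero hodd hn
  fin_cases c <;>
    simp only [omegaN, uEff, Matrix.cons_val_zero, Matrix.cons_val_one, Matrix.head_cons,
      Pi.smul_apply, smul_eq_mul, Fin.isValue, Matrix.cons_val_two, Matrix.tail_cons,
      Fin.mk_one, Fin.zero_eta, Fin.mk_zero]
  · rw [← Finset.mul_sum] at *
    rw [hc]; norm_num
  · rw [← Finset.mul_sum] at *
    rw [hs]; norm_num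
  · simp

/-- Elements of `GL(Ω_n)` fix the unit `u`. -/
lemma glomega_fix_u (hodd : Odd n) (hn : 3 < n) {T : (Fin 3 → ℝ) →ₗ[ℝ] (Fin 3 → ℝ)}
    (hT : T ∈ GLOmega n) : T uEff = uEff := by
  classical
  set τ : ℕ → ℕ := fun i => if h : i < n then Classical.choose (vertex_map hodd hn hT h) else 0
    with hτdef
  have hτ : ∀ i, i < n → τ i < n ∧ T (omegaN n i) = omegaN n (τ i) := by
    intro i hi
    have hspec := Classical.choose_spec (vertex_map hodd hn hT hi)
    rw [hτdef]
    simp only [dif_pos hi]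
    exact hspec
  have hinjOn : ∀ x ∈ Finset.range n, ∀ y ∈ Finset.range n, τ x = τ y → x = y := by
    intro x hx y hy hxy
    have h1 := (hτ x (Finset.mem_range.1 hx)).2
    have h2 := (hτ y (Finset.mem_range.1 hy)).2
    rw [hxy] at h1
    have := hT.1.1 (h1.trans h2.symm)
    exact omega_inj hodd hn (Finset.mem_range.1 hx) (Finset.mem_range.1 hy) this
  have himg : (Finset.range n).image τ = Finset.range n := by
    apply Finset.eq_of_subset_of_card_le
    · intro y hy
      rcases Finset.mem_image.1 hy with ⟨i, hi, rfl⟩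
      exact Finset.mem_range.2 (hτ i (Finset.mem_range.1 hi)).1
    · rw [Finset.card_range, Finset.card_image_of_injOn hinjOn, Finset.card_range]
  have hsum : ∑ i ∈ Finset.range n, T (omegaN n i) = ∑ i ∈ Finset.range n, omegaN n i := by
    calc ∑ i ∈ Finset.range n, T (omegaN n i)
        = ∑ i ∈ Finset.range n, omegaN n (τ i) :=
          Finset.sum_congr rfl fun i hi => (hτ i (Finset.mem_range.1 hi)).2
      _ = ∑ y ∈ (Finset.range n).image τ, omegaN n y := (Finset.sum_image hinjOn).symm
      _ = ∑ i ∈ Finset.range n, omegaN n i := by rw [himg]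
  rw [← map_sum, sum_omega hodd hn, map_smul] at hsum
  have hn0 : (n:ℝ) ≠ 0 := by positivity
  exact smul_right_injective (Fin 3 → ℝ) hn0 hsum

end HAux

namespace HAux

variable {n : ℕ}

/-- The CHSH value of the canonical ensemble with vertex indices `i, j`. -/
def Cv (n k i j : ℕ) : ℝ :=
  4 * (dot3 (QQ n k 0 0) (eN n i) + dot3 (QQ n k 0 1) (eBarN n i)
    + dot3 (QQ n k 1 0) (eN n j) + dot3 (QQ n k 1 1) (eBarN n j) - 1)

lemma dot3_smul_right (f g : Fin 3 → ℝ) (c : ℝ) : dot3 f (c • g) = c * dot3 f g := by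
  simp only [dot3, Finset.mul_sum, Pi.smul_apply, smul_eq_mul]
  exact Finset.sum_congr rfl fun x _ => by ring

lemma CEns_eq_Cv (k : ℕ) (pw : (Fin 2 → Fin 2 → ℝ) × (Fin 2 → Fin 2 → Fin 3 → ℝ)) (i j : ℕ)
    (h00 : pw.1 0 0 • pw.2 0 0 = eN n i) (h01 : pw.1 0 1 • pw.2 0 1 = eBarN n i)
    (h10 : pw.1 1 0 • pw.2 1 0 = eN n j) (h11 : pw.1 1 1 • pw.2 1 1 = eBarN n j) :
    CEns n k pw = Cv n k i j := by
  rw [CEns, Cv]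
  simp only [Fin.sum_univ_two]
  rw [← dot3_smul_right, ← dot3_smul_right, ← dot3_smul_right, ← dot3_smul_right,
    h00, h01, h10, h11]
  ring

lemma not_even (hodd : Odd n) : ¬ Even n := by
  rcases hodd with ⟨c, hc⟩
  intro ⟨d, hd⟩
  omega

/-- The key closed form for `Cv`. -/
lemma Cv_formula (hodd : Odd n) (hn : 3 < n) (k i j : ℕ) :
    Cv n k i j = 2 - 8*RN n^2*rN n^2 + 8*RN n^2*rN n^2 *
      (Real.cos ((k:ℝ)*thetaN n) * Real.cos (2*(i:ℝ)*thetaN n - (k:ℝ)*thetaN n)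
       + Real.sin ((k:ℝ)*thetaN n) * Real.sin (2*(j:ℝ)*thetaN n - (k:ℝ)*thetaN n)) := by
  have hP := Real.sin_sq_add_cos_sq ((k:ℝ)*thetaN n)
  have hR := R_id hodd hn
  rw [Cv]
  simp only [QQ, eN, eBarN, uEff, if_neg (not_even hodd), dot3, Fin.sum_univ_three,
    Matrix.cons_val_zero, Matrix.cons_val_one, Matrix.head_cons, Pi.add_apply, Pi.sub_apply,
    Pi.smul_apply, smul_eq_mul, Matrix.cons_val_two, Matrix.tail_cons, Nat.cast_zero,
    Matrix.head_fin_const, Fin.isValue]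
  rw [Real.cos_sub, Real.sin_sub]
  rw [show 2*((k:ℕ):ℝ)*thetaN n = 2*(((k:ℕ):ℝ)*thetaN n) by ring, Real.cos_two_mul',
    Real.sin_two_mul]
  norm_num
  linear_combination (4*RN n^2*rN n^2*(Real.cos (2*(j:ℝ)*thetaN n)
    - Real.cos (2*(i:ℝ)*thetaN n))) * hP + (8*RN n) * hR

end HAux

namespace HAux

variable {n : ℕ}

lemma exists_j (hn : 3 < n) (k : ℕ) (m : ℤ) (hm : (m - k) % 2 = 0) :
    ∃ j : ℕ, j < n ∧ ∃ t : ℤ, 2*(j:ℤ) - k = m + 2*n*t := by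
  obtain ⟨c, hc⟩ : ∃ c : ℤ, m + k = 2*c := ⟨(m+k)/2, by omega⟩
  have hn0 : (0:ℤ) < n := by exact_mod_cast (by omega : 0 < n)
  refine ⟨(c % n).toNat, ?_, -(c / n), ?_⟩
  · have h1 : 0 ≤ c % n := Int.emod_nonneg c hn0.ne'
    have h2 : c % n < n := Int.emod_lt_of_pos c hn0
    omega
  · have h1 : 0 ≤ c % n := Int.emod_nonneg c hn0.ne'
    rw [Int.toNat_of_nonneg h1]
    have h3 := Int.mul_ediv_add_emod c (n:ℤ)
    linear_combination (2:ℤ)*h3 - hc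

lemma cos_shift (hn : 3 < n) (m : ℤ) (t : ℤ) :
    Real.cos (((m + 2*(n:ℤ)*t : ℤ):ℝ) * thetaN n) = Real.cos ((m:ℝ) * thetaN n) := by
  push_cast
  rw [show ((m:ℝ) + 2*(n:ℝ)*(t:ℝ)) * thetaN n
      = (m:ℝ) * thetaN n + (t:ℝ) * (2 * ((n:ℝ) * thetaN n)) by ring, n_theta hn]
  exact Real.cos_add_int_mul_two_pi _ t

lemma sin_shift (hn : 3 < n) (m : ℤ) (t : ℤ) :
    Real.sin (((m + 2*(n:ℤ)*t : ℤ):ℝ) * thetaN n) = Real.sin ((m:ℝ) * thetaN n) := by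
  push_cast
  rw [show ((m:ℝ) + 2*(n:ℝ)*(t:ℝ)) * thetaN n
      = (m:ℝ) * thetaN n + (t:ℝ) * (2 * ((n:ℝ) * thetaN n)) by ring, n_theta hn]
  exact Real.sin_add_int_mul_two_pi _ t

lemma K_le {k : ℕ} (hodd : Odd n) (hn : 3 < n) (hk : k ≤ (n-1)/2) :
    (k:ℝ) * thetaN n ≤ Real.pi/2 - thetaN n/2 := by
  obtain ⟨m, hm⟩ := hodd
  have hkm : k ≤ m := by omega
  have hθ := theta_pos hn
  have hkr : (k:ℝ) ≤ m := by exact_mod_cast hkm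
  have hnr : (n:ℝ) = 2*(m:ℝ)+1 := by exact_mod_cast congrArg (Nat.cast : ℕ → ℝ) hm
  have hmθ : (m:ℝ) * thetaN n = Real.pi/2 - thetaN n/2 := by
    have h := n_theta hn
    rw [hnr] at h
    linarith
  calc (k:ℝ) * thetaN n ≤ (m:ℝ) * thetaN n := by nlinarith
    _ = Real.pi/2 - thetaN n/2 := hmθ

lemma sinK_nonneg {k : ℕ} (hodd : Odd n) (hn : 3 < n) (hk : k ≤ (n-1)/2) :
    0 ≤ Real.sin ((k:ℝ) * thetaN n) := by
  apply Real.sin_nonneg_of_nonneg_of_le_pi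
  · have := theta_pos hn; positivity
  · have := K_le hodd hn hk
    have := theta_pos hn
    nlinarith [Real.pi_pos]

lemma cosK_ge {k : ℕ} (hodd : Odd n) (hn : 3 < n) (hk : k ≤ (n-1)/2) :
    Real.sin (thetaN n / 2) ≤ Real.cos ((k:ℝ) * thetaN n) := by
  have hθ := theta_pos hn
  have h1 : Real.cos (Real.pi/2 - thetaN n/2) ≤ Real.cos ((k:ℝ) * thetaN n) := by
    apply Real.cos_le_cos_of_nonneg_of_le_pi
    · positivity
    · have := theta_lt_pi_half hodd hn
      nlinarith [Real.pi_pos]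
    · exact K_le hodd hn hk
  rwa [Real.cos_pi_div_two_sub] at h1

lemma cosK_nonneg {k : ℕ} (hodd : Odd n) (hn : 3 < n) (hk : k ≤ (n-1)/2) :
    0 ≤ Real.cos ((k:ℝ) * thetaN n) := by
  have h := cosK_ge hodd hn hk
  have hθ := theta_pos hn
  have hs : 0 ≤ Real.sin (thetaN n/2) := by
    apply Real.sin_nonneg_of_nonneg_of_le_pi
    · positivity
    · nlinarith [theta_lt_pi_half hodd hn, Real.pi_pos]
  linarith

lemma two_h_sq (n : ℕ) : 2 * Real.cos (thetaN n / 2)^2 = 1 + Real.cos (thetaN n) := by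
  have := Real.cos_two_mul (thetaN n / 2)
  rw [show 2*(thetaN n/2) = thetaN n by ring] at this
  linarith

lemma cos_ge_sin_half (hodd : Odd n) (hn : 3 < n) :
    Real.sin (thetaN n / 2) ≤ Real.cos (thetaN n) := by
  have hθ := theta_pos hn
  have hle := theta_le hodd hn
  have hs : Real.sin (thetaN n / 2) ≤ thetaN n / 2 := Real.sin_le (by positivity)
  have hs0 : 0 ≤ Real.sin (thetaN n / 2) := by
    apply Real.sin_nonneg_of_nonneg_of_le_pi
    · positivity
    · nlinarith [theta_lt_pi_half hodd hn, Real.pi_pos]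
  have hlt : Real.sin (thetaN n / 2) ≤ 1/2 := by
    nlinarith [Real.pi_lt_d2]
  have hcos : Real.cos (thetaN n) = 1 - 2 * Real.sin (thetaN n / 2)^2 := by
    have h1 := Real.cos_two_mul' (thetaN n / 2)
    rw [show 2*(thetaN n/2) = thetaN n by ring] at h1
    have h2 := Real.sin_sq_add_cos_sq (thetaN n / 2)
    linarith
  nlinarith

/-- The key inequality for the odd case. -/
lemma key_odd {k : ℕ} (hodd : Odd n) (hn : 3 < n) (hk : k ≤ (n-1)/2) :
    4 - 2*(8*RN n^2*rN n^2) ≤ 8*RN n^2*rN n^2 * Real.cos ((k:ℝ)*thetaN n)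
      * (1 - Real.cos (thetaN n)) := by
  set R := RN n
  set r := rN n
  set s := Real.sin (thetaN n / 2)
  set t := Real.cos (thetaN n)
  set ck := Real.cos ((k:ℝ)*thetaN n)
  have hR := R_id hodd hn
  have hrt := rsq_cos hodd hn
  have hR0 := R_pos hodd hn
  have hr0 := r_pos hodd hn
  have ht0 := cos_theta_pos hodd hn
  have hs0 : 0 ≤ s := by
    apply Real.sin_nonneg_of_nonneg_of_le_pi
    · have := theta_pos hn; positivity
    · nlinarith [theta_lt_pi_half hodd hn, Real.pi_pos, theta_pos hn]
  have hsck : s ≤ ck := cosK_ge hodd hn hk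
  have hst : s ≤ t := cos_ge_sin_half hodd hn
  have h1t : 1 - t = 2 * s^2 := by
    have h1 := Real.cos_two_mul' (thetaN n / 2)
    rw [show 2*(thetaN n/2) = thetaN n by ring] at h1
    have h2 := Real.sin_sq_add_cos_sq (thetaN n / 2)
    linarith
  have e1 : (2:ℝ)*s^2 = 1 - t := by linarith
  have hs2 : s^2 ≤ ck * t := by
    nlinarith [mul_le_mul hsck hst hs0 (le_trans hs0 hsck)]
  have hr2s : r^2 * s^2 ≤ ck := by
    have h5 := mul_le_mul_of_nonneg_left hs2 (sq_nonneg r)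
    have e : r^2*(ck*t) = ck := by linear_combination ck*hrt
    linarith
  have hsq : (R*(1+r^2))^2 = 1 := by rw [hR]; norm_num
  have hF : 2*r^2*s^2 = r^2 - 1 := by linear_combination r^2 * e1 - hrt
  have hid : 4 - 16*R^2*r^2 = 16*R^2*r^4*s^4 := by
    linear_combination (-4)*hsq - 4*R^2*(2*r^2*s^2 + r^2 - 1)*hF
  have hint := mul_le_mul_of_nonneg_left hr2s
      (show (0:ℝ) ≤ 16*R^2*r^2*s^2 by positivity)
  have e2 : 8*R^2*r^2*ck*(1-t) = 16*R^2*r^2*ck*s^2 := by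
    linear_combination (-(8*R^2*r^2*ck))*e1
  have e3 : 16*R^2*r^2*s^2*(r^2*s^2) = 16*R^2*r^4*s^4 := by ring
  have e4 : 16*R^2*r^2*s^2*ck = 16*R^2*r^2*ck*s^2 := by ring
  linarith

lemma even_slack (hodd : Odd n) (hn : 3 < n) : 0 ≤ 4 - 2*(8*RN n^2*rN n^2) := by
  have hR := R_id hodd hn
  have hsq : (RN n*(1+rN n^2))^2 = 1 := by rw [hR]; norm_num
  nlinarith [sq_nonneg (2*RN n*(rN n^2 - 1)), hsq]

end HAux

namespace HAux

variable {n : ℕ}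

/-- The optimal value in the even case. -/
def Vev (n k : ℕ) : ℝ := 2 - 8*RN n^2*rN n^2 + 8*RN n^2*rN n^2 *
  (Real.cos ((k:ℝ)*thetaN n) + Real.sin ((k:ℝ)*thetaN n) * Real.cos (thetaN n/2))

/-- The optimal value in the odd case. -/
def Vod (n k : ℕ) : ℝ := -2 + 8*RN n^2*rN n^2 + 8*RN n^2*rN n^2 *
  (Real.cos ((k:ℝ)*thetaN n) + Real.sin ((k:ℝ)*thetaN n) * Real.cos (thetaN n/2))

lemma arg_cast (i k : ℕ) : 2*(i:ℝ)*thetaN n - (k:ℝ)*thetaN n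
    = ((2*(i:ℤ) - k : ℤ):ℝ)*thetaN n := by push_cast; ring

lemma abs_Cv_le_even {k : ℕ} (hodd : Odd n) (hn : 3 < n) (hk : k ≤ (n-1)/2)
    (i j : ℕ) : |Cv n k i j| ≤ Vev n k := by
  rw [Cv_formula hodd hn, Vev]
  set c := 8*RN n^2*rN n^2 with hc
  set ck := Real.cos ((k:ℝ)*thetaN n)
  set sk := Real.sin ((k:ℝ)*thetaN n)
  set h := Real.cos (thetaN n/2)
  set x := Real.cos (2*(i:ℝ)*thetaN n - (k:ℝ)*thetaN n) with hxdef
  set y := Real.sin (2*(j:ℝ)*thetaN n - (k:ℝ)*thetaN n) with hydef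
  have hc0 : 0 ≤ c := by rw [hc]; positivity
  have hck : 0 ≤ ck := cosK_nonneg hodd hn hk
  have hsk : 0 ≤ sk := sinK_nonneg hodd hn hk
  have hx1 : x ≤ 1 := Real.cos_le_one _
  have hx2 : -1 ≤ x := Real.neg_one_le_cos _
  have hy1 : y ≤ h := by
    rw [hydef, arg_cast]; exact sin_le_cos_half hodd hn _
  have hy2 : -h ≤ y := by
    rw [hydef, arg_cast]; exact neg_cos_half_le_sin hodd hn _
  have hslack : 0 ≤ 4 - 2*c := by rw [hc]; exact even_slack hodd hn
  rw [abs_le]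
  constructor
  · nlinarith [mul_nonneg (mul_nonneg hc0 hck) (by linarith : (0:ℝ) ≤ 1 + x),
      mul_nonneg (mul_nonneg hc0 hsk) (by linarith : (0:ℝ) ≤ h + y)]
  · nlinarith [mul_nonneg (mul_nonneg hc0 hck) (by linarith : (0:ℝ) ≤ 1 - x),
      mul_nonneg (mul_nonneg hc0 hsk) (by linarith : (0:ℝ) ≤ h - y)]

lemma abs_Cv_le_odd {k : ℕ} (hodd : Odd n) (hn : 3 < n) (hk : k ≤ (n-1)/2)
    (hko : Odd k) (i j : ℕ) : |Cv n k i j| ≤ Vod n k := by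
  rw [Cv_formula hodd hn, Vod]
  set c := 8*RN n^2*rN n^2 with hc
  set ck := Real.cos ((k:ℝ)*thetaN n)
  set sk := Real.sin ((k:ℝ)*thetaN n)
  set h := Real.cos (thetaN n/2)
  set t := Real.cos (thetaN n)
  set x := Real.cos (2*(i:ℝ)*thetaN n - (k:ℝ)*thetaN n) with hxdef
  set y := Real.sin (2*(j:ℝ)*thetaN n - (k:ℝ)*thetaN n) with hydef
  have hc0 : 0 ≤ c := by rw [hc]; positivity
  have hck : 0 ≤ ck := cosK_nonneg hodd hn hk
  have hsk : 0 ≤ sk := sinK_nonneg hodd hn hk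
  have hx1 : x ≤ t := by
    rw [hxdef, arg_cast]
    apply cos_odd_mul_le hodd hn
    rcases hko with ⟨d, hd⟩
    exact ⟨(i:ℤ) - d - 1, by push_cast [hd]; ring⟩
  have hx2 : -1 ≤ x := Real.neg_one_le_cos _
  have hy1 : y ≤ h := by
    rw [hydef, arg_cast]; exact sin_le_cos_half hodd hn _
  have hy2 : -h ≤ y := by
    rw [hydef, arg_cast]; exact neg_cos_half_le_sin hodd hn _
  have hkey : 4 - 2*c ≤ c * ck * (1 - t) := by
    have := key_odd hodd hn hk
    rw [hc]; linarith [this]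
  rw [abs_le]
  constructor
  · nlinarith [mul_nonneg (mul_nonneg hc0 hck) (by linarith : (0:ℝ) ≤ 1 + x),
      mul_nonneg (mul_nonneg hc0 hsk) (by linarith : (0:ℝ) ≤ h + y)]
  · nlinarith [mul_le_mul_of_nonneg_left (by linarith : 1 - t ≤ 1 - x)
      (mul_nonneg hc0 hck),
      mul_nonneg (mul_nonneg hc0 hsk) (by linarith : (0:ℝ) ≤ h - y), hkey]

lemma attain_even {k : ℕ} (hodd : Odd n) (hn : 3 < n) (hk : k ≤ (n-1)/2)
    (hke : Even k) : ∃ i < n, ∃ j < n, Cv n k i j = Vev n k := by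
  obtain ⟨d, hd⟩ := hke
  obtain ⟨m, hpar, hsin⟩ := exists_sin_max hodd hn k
  obtain ⟨j, hj, t, hjt⟩ := exists_j hn k m hpar
  refine ⟨d, by omega, j, hj, ?_⟩
  rw [Cv_formula hodd hn, Vev]
  have hci : Real.cos (2*(d:ℝ)*thetaN n - (k:ℝ)*thetaN n) = 1 := by
    rw [show 2*(d:ℝ)*thetaN n - (k:ℝ)*thetaN n = 0 by
      have : (k:ℝ) = 2*(d:ℝ) := by
        have h := congrArg (Nat.cast : ℕ → ℝ) hd
        push_cast at h
        linarith
      rw [this]; ring]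
    exact Real.cos_zero
  have hsj : Real.sin (2*(j:ℝ)*thetaN n - (k:ℝ)*thetaN n) = Real.cos (thetaN n/2) := by
    rw [arg_cast, hjt, sin_shift hn, hsin]
  rw [hci, hsj]
  ring

lemma attain_odd {k : ℕ} (hodd : Odd n) (hn : 3 < n) (hk : k ≤ (n-1)/2)
    (hko : Odd k) : ∃ i < n, ∃ j < n, Cv n k i j = -Vod n k := by
  have hn2 : n % 2 = 1 := Nat.odd_iff.1 hodd
  have hk2 : k % 2 = 1 := Nat.odd_iff.1 hko
  obtain ⟨i, hi, ti, hit⟩ := exists_j hn k (n:ℤ) (by omega)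
  obtain ⟨m, hpar, hsin⟩ := exists_sin_min hodd hn k
  obtain ⟨j, hj, tj, hjt⟩ := exists_j hn k m hpar
  refine ⟨i, hi, j, hj, ?_⟩
  rw [Cv_formula hodd hn, Vod]
  have hci : Real.cos (2*(i:ℝ)*thetaN n - (k:ℝ)*thetaN n) = -1 := by
    rw [arg_cast, hit, cos_shift hn, cos_n_theta hn]
  have hsj : Real.sin (2*(j:ℝ)*thetaN n - (k:ℝ)*thetaN n) = -Real.cos (thetaN n/2) := by
    rw [arg_cast, hjt, sin_shift hn, hsin]
  rw [hci, hsj]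
  ring

end HAux

namespace HAux

variable {n : ℕ}

lemma eN_eq (hodd : Odd n) (i : ℕ) : eN n i = RN n • omegaN n i := by
  rw [eN, if_neg (not_even hodd)]; rfl

lemma cos_two_shift (hn : 3 < n) (a : ℕ) (m t : ℤ) (h : 2*(a:ℤ) = m + 2*(n:ℤ)*t) :
    Real.cos (2*(a:ℝ)*thetaN n) = Real.cos ((m:ℝ)*thetaN n) := by
  have harg : 2*(a:ℝ)*thetaN n = ((m + 2*(n:ℤ)*t : ℤ):ℝ)*thetaN n := by
    have hc := congrArg (fun z : ℤ => (z:ℝ)) h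
    push_cast at hc ⊢
    rw [show 2*(a:ℝ)*thetaN n = (2*(a:ℝ))*thetaN n by ring, hc]
  rw [harg, cos_shift hn]

lemma sin_two_shift (hn : 3 < n) (a : ℕ) (m t : ℤ) (h : 2*(a:ℤ) = m + 2*(n:ℤ)*t) :
    Real.sin (2*(a:ℝ)*thetaN n) = Real.sin ((m:ℝ)*thetaN n) := by
  have harg : 2*(a:ℝ)*thetaN n = ((m + 2*(n:ℤ)*t : ℤ):ℝ)*thetaN n := by
    have hc := congrArg (fun z : ℤ => (z:ℝ)) h
    push_cast at hc ⊢
    rw [show 2*(a:ℝ)*thetaN n = (2*(a:ℝ))*thetaN n by ring, hc]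
  rw [harg, sin_shift hn]

/-- `ē_n(i)` is proportional to the midpoint of an edge of the polygon. -/
lemma mid_eq (hodd : Odd n) (hn : 3 < n) (i : ℕ) :
    eBarN n i = (RN n * rN n^2) •
      ((1/2:ℝ) • (omegaN n ((i + (n-1)/2) % n) + omegaN n ((i + (n-1)/2 + 1) % n))) := by
  have hn2 : n % 2 = 1 := Nat.odd_iff.1 hodd
  have hR := R_id hodd hn
  have hrt := rsq_cos hodd hn
  set q := i + (n-1)/2 with hq
  have hdaZ : (n:ℤ) * ((q/n : ℕ):ℤ) + ((q % n : ℕ):ℤ) = (q:ℤ) := by exact_mod_cast Nat.div_add_mod q n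
  have hdbZ : (n:ℤ) * (((q+1)/n : ℕ):ℤ) + (((q+1) % n : ℕ):ℤ) = ((q:ℤ)+1) := by
    exact_mod_cast Nat.div_add_mod (q+1) n
  have hqZ : (q:ℤ) = (i:ℤ) + (((n-1)/2 : ℕ):ℤ) := by exact_mod_cast rfl
  have h2Z : 2*(((n-1)/2 : ℕ):ℤ) = (n:ℤ) - 1 := by
    have : 2*((n-1)/2) = n - 1 := by omega
    omega
  have hsa : 2*((q % n : ℕ):ℤ) = (2*(i:ℤ) + n - 1) + 2*(n:ℤ)*(-((q/n : ℕ):ℤ)) := by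
    linear_combination (2:ℤ)*hdaZ + 2*hqZ + h2Z
  have hsb : 2*(((q+1) % n : ℕ):ℤ) = (2*(i:ℤ) + n + 1) + 2*(n:ℤ)*(-(((q+1)/n : ℕ):ℤ)) := by
    linear_combination (2:ℤ)*hdbZ + 2*hqZ + h2Z
  have hnt := n_theta hn
  have hargA : ((2*(i:ℤ) + n - 1 : ℤ):ℝ)*thetaN n
      = (2*(i:ℝ)*thetaN n - thetaN n) + Real.pi := by
    push_cast
    linear_combination hnt
  have hargB : ((2*(i:ℤ) + n + 1 : ℤ):ℝ)*thetaN n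
      = (2*(i:ℝ)*thetaN n + thetaN n) + Real.pi := by
    push_cast
    linear_combination hnt
  have hca : Real.cos (2*((q % n : ℕ):ℝ)*thetaN n)
      = -Real.cos (2*(i:ℝ)*thetaN n - thetaN n) := by
    rw [cos_two_shift hn (q % n) (2*(i:ℤ) + n - 1) (-((q/n : ℕ):ℤ)) hsa, hargA,
      Real.cos_add_pi]
  have hsa' : Real.sin (2*((q % n : ℕ):ℝ)*thetaN n)
      = -Real.sin (2*(i:ℝ)*thetaN n - thetaN n) := by
    rw [sin_two_shift hn (q % n) (2*(i:ℤ) + n - 1) (-((q/n : ℕ):ℤ)) hsa, hargA,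
      Real.sin_add_pi]
  have hcb : Real.cos (2*(((q+1) % n : ℕ):ℝ)*thetaN n)
      = -Real.cos (2*(i:ℝ)*thetaN n + thetaN n) := by
    rw [cos_two_shift hn ((q+1) % n) (2*(i:ℤ) + n + 1) (-(((q+1)/n : ℕ):ℤ)) hsb, hargB,
      Real.cos_add_pi]
  have hsb' : Real.sin (2*(((q+1) % n : ℕ):ℝ)*thetaN n)
      = -Real.sin (2*(i:ℝ)*thetaN n + thetaN n) := by
    rw [sin_two_shift hn ((q+1) % n) (2*(i:ℤ) + n + 1) (-(((q+1)/n : ℕ):ℤ)) hsb, hargB,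
      Real.sin_add_pi]
  have hcaE := hca; rw [Real.cos_sub] at hcaE
  have hsaE := hsa'; rw [Real.sin_sub] at hsaE
  have hcbE := hcb; rw [Real.cos_add] at hcbE
  have hsbE := hsb'; rw [Real.sin_add] at hsbE
  funext c
  fin_cases c <;>
    simp [eBarN, eN, uEff, omegaN, if_neg (not_even hodd)]
  · linear_combination (-(RN n*rN n^3)/2) * hcaE + (-(RN n*rN n^3)/2) * hcbE
      + (RN n*rN n*Real.cos (2*(i:ℝ)*thetaN n)) * hrt
  · linear_combination (-(RN n*rN n^3)/2) * hsaE + (-(RN n*rN n^3)/2) * hsbE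
      + (RN n*rN n*Real.sin (2*(i:ℝ)*thetaN n)) * hrt
  · linear_combination (-1 : ℝ) * hR

/-- Construction of a maximally entangled ensemble realizing `Cv n k i j`. -/
lemma exists_ensemble (hodd : Odd n) (hn : 3 < n) (k i j : ℕ) (hi : i < n) (hj : j < n) :
    ∃ pw ∈ EnsME n, CEns n k pw = Cv n k i j := by
  have hR := R_id hodd hn
  have hR0 := R_pos hodd hn
  have hr0 := r_pos hodd hn
  have hnpos : 0 < n := by omega
  set mid : ℕ → Fin 3 → ℝ := fun i =>
    (1/2:ℝ) • (omegaN n ((i + (n-1)/2) % n) + omegaN n ((i + (n-1)/2 + 1) % n)) with hmid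
  set pw : (Fin 2 → Fin 2 → ℝ) × (Fin 2 → Fin 2 → Fin 3 → ℝ) :=
    (![![RN n, RN n * rN n^2], ![RN n, RN n * rN n^2]],
     ![![omegaN n i, mid i], ![omegaN n j, mid j]]) with hpw
  have hP00 : pw.1 0 0 = RN n := rfl
  have hP01 : pw.1 0 1 = RN n * rN n^2 := rfl
  have hP10 : pw.1 1 0 = RN n := rfl
  have hP11 : pw.1 1 1 = RN n * rN n^2 := rfl
  have h00 : pw.1 0 0 • pw.2 0 0 = eN n i := by
    show RN n • omegaN n i = eN n i
    rw [eN_eq hodd]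
  have h01 : pw.1 0 1 • pw.2 0 1 = eBarN n i := by
    show (RN n * rN n^2) • mid i = eBarN n i
    rw [hmid, mid_eq hodd hn i]
  have h10 : pw.1 1 0 • pw.2 1 0 = eN n j := by
    show RN n • omegaN n j = eN n j
    rw [eN_eq hodd]
  have h11 : pw.1 1 1 • pw.2 1 1 = eBarN n j := by
    show (RN n * rN n^2) • mid j = eBarN n j
    rw [hmid, mid_eq hodd hn j]
  have hmidmem : ∀ m : ℕ, mid m ∈ OmegaN n := by
    intro m
    have ha := omega_mem ((m + (n-1)/2) % n) (Nat.mod_lt _ hnpos)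
    have hb := omega_mem ((m + (n-1)/2 + 1) % n) (Nat.mod_lt _ hnpos)
    have hconv := convex_convexHull ℝ {v : Fin 3 → ℝ | ∃ i < n, v = omegaN n i}
    have := hconv ha hb (by norm_num : (0:ℝ) ≤ 1/2) (by norm_num : (0:ℝ) ≤ 1/2) (by norm_num)
    rw [hmid]
    simpa [smul_add, OmegaN] using this
  have hsum0 : ∑ a, pw.1 0 a • pw.2 0 a = uEff := by
    rw [Fin.sum_univ_two, h00, h01, eBarN]
    abel
  have hsum1 : ∑ a, pw.1 1 a • pw.2 1 a = uEff := by
    rw [Fin.sum_univ_two, h10, h11, eBarN]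
    abel
  have hAll : pw ∈ EnsAll n := by
    refine ⟨?_, ?_, ?_, ?_⟩
    · intro s a
      fin_cases s <;> fin_cases a
      · show (0:ℝ) ≤ RN n; positivity
      · show (0:ℝ) ≤ RN n * rN n^2; positivity
      · show (0:ℝ) ≤ RN n; positivity
      · show (0:ℝ) ≤ RN n * rN n^2; positivity
    · intro s
      fin_cases s <;> rw [Fin.sum_univ_two] <;>
        · show RN n + RN n * rN n^2 = 1
          linear_combination hR
    · intro s a
      fin_cases s <;> fin_cases a
      · exact omega_mem i hi
      · exact hmidmem i
      · exact omega_mem j hj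
      · exact hmidmem j
    · rw [hsum0, hsum1]
  refine ⟨pw, ⟨hAll, LinearMap.id, ⟨Function.bijective_id, by rw [LinearMap.id_coe, Set.image_id]⟩,
    i, hi, j, hj, ?_, ?_, ?_, ?_⟩, ?_⟩
  · rw [LinearMap.id_apply, h00]
  · rw [LinearMap.id_apply, h01]
  · rw [LinearMap.id_apply, h10]
  · rw [LinearMap.id_apply, h11]
  · exact CEns_eq_Cv k pw i j h00 h01 h10 h11

end HAux

namespace HAux

variable {n : ℕ}

lemma key_div (hodd : Odd n) (hn : 3 < n) :
    RN n / Real.cos (thetaN n/2)^2 = 2*RN n^2*rN n^2 := by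
  have hh := two_h_sq n
  have hrt := rsq_cos hodd hn
  have hR := R_id hodd hn
  have hhp := cos_half_pos hodd hn
  rw [div_eq_iff (by positivity)]
  linear_combination (-(RN n^2*rN n^2))*hh - RN n^2*hrt - RN n*hR

lemma key_div' (hodd : Odd n) (hn : 3 < n) :
    RN n / Real.cos (thetaN n/2) = 2*RN n^2*rN n^2*Real.cos (thetaN n/2) := by
  have hh := two_h_sq n
  have hrt := rsq_cos hodd hn
  have hR := R_id hodd hn
  have hhp := cos_half_pos hodd hn
  rw [div_eq_iff (by positivity)]
  linear_combination (-(RN n^2*rN n^2))*hh - RN n^2*hrt - RN n*hR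

lemma Vev_eq (hodd : Odd n) (hn : 3 < n) (k : ℕ) :
    Vev n k = 4 * (RN n / Real.cos (thetaN n / 2) ^ 2 * Real.cos ((k : ℝ) * thetaN n)
        + RN n / Real.cos (thetaN n / 2) * Real.sin ((k : ℝ) * thetaN n)
        + RN n ^ 2 * (1 + rN n ^ 4)) - 2 := by
  rw [key_div hodd hn, key_div' hodd hn, Vev]
  have hR := R_id hodd hn
  linear_combination (-(4*(RN n*(1+rN n^2)+1)))*hR

lemma Vod_eq (hodd : Odd n) (hn : 3 < n) (k : ℕ) :
    Vod n k = 4 * (RN n / Real.cos (thetaN n / 2) ^ 2 * Real.cos ((k : ℝ) * thetaN n)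
        + RN n / Real.cos (thetaN n / 2) * Real.sin ((k : ℝ) * thetaN n)
        + 2 * RN n ^ 2 * rN n ^ 2) - 2 := by
  rw [key_div hodd hn, key_div' hodd hn, Vod]
  ring

/-- The main computation: `H_n(k)` equals `Vev` for even `k`, `Vod` for odd `k`. -/
lemma Hfun_eq_even {k : ℕ} (hodd : Odd n) (hn : 3 < n) (hk : k ≤ (n-1)/2)
    (hke : Even k) : Hfun n k = Vev n k := by
  obtain ⟨i, hi, j, hj, hCv⟩ := attain_even hodd hn hk hke
  obtain ⟨pw, hpwME, hpwC⟩ := exists_ensemble hodd hn k i j hi hj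
  have hub : ∀ y ∈ (fun pw => |CEns n k pw|) '' EnsME n, y ≤ Vev n k := by
    rintro y ⟨pw', hpw', rfl⟩
    obtain ⟨hAll, η, hη, i', hi', j', hj', h00, h01, h10, h11⟩ := hpw'
    obtain ⟨i2, hi2, hmapi⟩ := vertex_map hodd hn hη hi'
    obtain ⟨j2, hj2, hmapj⟩ := vertex_map hodd hn hη hj'
    have he1 : pw'.1 0 0 • pw'.2 0 0 = eN n i2 := by
      rw [← h00, eN_eq hodd, map_smul, hmapi, ← eN_eq hodd]
    have he2 : pw'.1 0 1 • pw'.2 0 1 = eBarN n i2 := by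
      rw [← h01, eBarN, eBarN, map_sub, glomega_fix_u hodd hn hη, eN_eq hodd, map_smul,
        hmapi, ← eN_eq hodd]
    have he3 : pw'.1 1 0 • pw'.2 1 0 = eN n j2 := by
      rw [← h10, eN_eq hodd, map_smul, hmapj, ← eN_eq hodd]
    have he4 : pw'.1 1 1 • pw'.2 1 1 = eBarN n j2 := by
      rw [← h11, eBarN, eBarN, map_sub, glomega_fix_u hodd hn hη, eN_eq hodd, map_smul,
        hmapj, ← eN_eq hodd]
    show |CEns n k pw'| ≤ Vev n k
    rw [CEns_eq_Cv k pw' i2 j2 he1 he2 he3 he4]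
    exact abs_Cv_le_even hodd hn hk i2 j2
  have hV0 : 0 ≤ Vev n k := by
    have h1 := abs_Cv_le_even hodd hn hk i j
    rw [hCv] at h1
    linarith [abs_nonneg (Vev n k)]
  have hmem : Vev n k ∈ (fun pw => |CEns n k pw|) '' EnsME n :=
    ⟨pw, hpwME, by show |CEns n k pw| = Vev n k; rw [hpwC, hCv, abs_of_nonneg hV0]⟩
  exact IsGreatest.csSup_eq ⟨hmem, hub⟩

lemma Hfun_eq_odd {k : ℕ} (hodd : Odd n) (hn : 3 < n) (hk : k ≤ (n-1)/2)
    (hko : Odd k) : Hfun n k = Vod n k := by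
  obtain ⟨i, hi, j, hj, hCv⟩ := attain_odd hodd hn hk hko
  obtain ⟨pw, hpwME, hpwC⟩ := exists_ensemble hodd hn k i j hi hj
  have hub : ∀ y ∈ (fun pw => |CEns n k pw|) '' EnsME n, y ≤ Vod n k := by
    rintro y ⟨pw', hpw', rfl⟩
    obtain ⟨hAll, η, hη, i', hi', j', hj', h00, h01, h10, h11⟩ := hpw'
    obtain ⟨i2, hi2, hmapi⟩ := vertex_map hodd hn hη hi'
    obtain ⟨j2, hj2, hmapj⟩ := vertex_map hodd hn hη hj'
    have he1 : pw'.1 0 0 • pw'.2 0 0 = eN n i2 := by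
      rw [← h00, eN_eq hodd, map_smul, hmapi, ← eN_eq hodd]
    have he2 : pw'.1 0 1 • pw'.2 0 1 = eBarN n i2 := by
      rw [← h01, eBarN, eBarN, map_sub, glomega_fix_u hodd hn hη, eN_eq hodd, map_smul,
        hmapi, ← eN_eq hodd]
    have he3 : pw'.1 1 0 • pw'.2 1 0 = eN n j2 := by
      rw [← h10, eN_eq hodd, map_smul, hmapj, ← eN_eq hodd]
    have he4 : pw'.1 1 1 • pw'.2 1 1 = eBarN n j2 := by
      rw [← h11, eBarN, eBarN, map_sub, glomega_fix_u hodd hn hη, eN_eq hodd, map_smul,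
        hmapj, ← eN_eq hodd]
    show |CEns n k pw'| ≤ Vod n k
    rw [CEns_eq_Cv k pw' i2 j2 he1 he2 he3 he4]
    exact abs_Cv_le_odd hodd hn hk hko i2 j2
  have hV0 : 0 ≤ Vod n k := by
    have h1 := abs_Cv_le_odd hodd hn hk hko i j
    rw [hCv] at h1
    linarith [abs_nonneg (-Vod n k)]
  have hmem : Vod n k ∈ (fun pw => |CEns n k pw|) '' EnsME n :=
    ⟨pw, hpwME, by show |CEns n k pw| = Vod n k; rw [hpwC, hCv, abs_neg, abs_of_nonneg hV0]⟩
  exact IsGreatest.csSup_eq ⟨hmem, hub⟩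

end HAux


/-- closed-form expressions for `H_n(k)`. -/
theorem Hfun_formula (n : ℕ) (hodd : Odd n) (hn : 3 < n) (k : ℕ) (hk : k ≤ (n - 1) / 2) :
    (Even k → Hfun n k =
      4 * (RN n / Real.cos (thetaN n / 2) ^ 2 * Real.cos ((k : ℝ) * thetaN n)
        + RN n / Real.cos (thetaN n / 2) * Real.sin ((k : ℝ) * thetaN n)
        + RN n ^ 2 * (1 + rN n ^ 4)) - 2) ∧
    (Odd k → Hfun n k =
      4 * (RN n / Real.cos (thetaN n / 2) ^ 2 * Real.cos ((k : ℝ) * thetaN n)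
        + RN n / Real.cos (thetaN n / 2) * Real.sin ((k : ℝ) * thetaN n)
        + 2 * RN n ^ 2 * rN n ^ 2) - 2) := by
  constructor
  · intro hke
    rw [HAux.Hfun_eq_even hodd hn hk hke]
    exact HAux.Vev_eq hodd hn k
  · intro hko
    rw [HAux.Hfun_eq_odd hodd hn hk hko]
    exact HAux.Vod_eq hodd hn k
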